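/- Let g be an aligned history-dependent game with reference static game ĝ, and let P be the asynchronous learning rule built from best response dynamics for every agent. If the all-ones profile 1⃗ is a strict Nash equilibrium of ĝ, then for every initial distribution π and every time t ≥ 1, Pr(s(t;P_π) = 1⃗) ≥ Pr(s(t;P̂_π) = 1⃗); moreover, if π has full support on A, then Pr(s(t;P_π) = 1⃗) > 0 for every t ≥ 1. -/

import Mathlib

open scoped Classical
open Finset

abbrev Profile (n : ℕ) := Fin n → Bool
abbrev UtilProfile (n : ℕ) := Fin n → Profile n → ℝ
abbrev Rule (n : ℕ) := Profile n → Profile n → UtilProfile n → ℝ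

/-- `P` is an individual learning rule for agent `i`: it maps into `[0,1]`, is a
probability measure over next profiles, and only agent `i` may change its action. -/
def IsIndividual {n : ℕ} (i : Fin n) (P : Rule n) : Prop :=
  (∀ (a : Profile n) (U : UtilProfile n), ∑ b : Profile n, P a b U = 1) ∧
  (∀ (a b : Profile n) (U : UtilProfile n), 0 ≤ P a b U ∧ P a b U ≤ 1) ∧
  (∀ (a b : Profile n) (U : UtilProfile n), (∃ j, j ≠ i ∧ a j ≠ b j) → P a b U = 0)

/-- `P` is local: the transition probability only depends on the selected action of `i`
and the pair of payoffs `(U_i(0,a_{-i}), U_i(1,a_{-i}))`. -/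
def IsLocalRule {n : ℕ} (i : Fin n) (P : Rule n) : Prop :=
  ∃ Pbar : Bool → ℝ × ℝ → ℝ,
    ∀ (a : Profile n) (b : Bool) (U : UtilProfile n),
      P a (Function.update a i b) U
        = Pbar b (U i (Function.update a i false), U i (Function.update a i true))

/-- The utility profile obtained from `U` by adding `l` to agent `i`'s utility on
profiles where `i` plays `b`. -/
def bump {n : ℕ} (i : Fin n) (U : UtilProfile n) (b : Bool) (l : ℝ) : UtilProfile n :=
  Function.update U i (fun x => if x i = b then U i x + l else U i x)

/-- `P` is monotone with respect to utility. -/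
def IsMonotoneRule {n : ℕ} (i : Fin n) (P : Rule n) : Prop :=
  ∀ (U : UtilProfile n) (b : Bool) (l : ℝ), 0 ≤ l → ∀ a : Profile n,
    P a (Function.update a i b) U ≤ P a (Function.update a i b) (bump i U b l)

/-- The asynchronous learning rule built from individual learning rules. -/
noncomputable def asyncRule {n : ℕ} (Pvec : Fin n → Rule n) : Rule n :=
  fun a b U => (1 / (n : ℝ)) * ∑ i : Fin n, Pvec i a b U

/-- The best-response set of agent `i` to `a_{-i}` given utilities `U`. -/
noncomputable def BRset {n : ℕ} (i : Fin n) (U : UtilProfile n) (a : Profile n) : Finset Bool :=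
  Finset.univ.filter fun b => ∀ b' : Bool,
    U i (Function.update a i b') ≤ U i (Function.update a i b)

/-- Best response dynamics for agent `i` (ties broken uniformly at random). -/
noncomputable def bestResponse {n : ℕ} (i : Fin n) : Rule n :=
  fun a b U =>
    if ∀ j, j ≠ i → a j = b j then
      (if b i ∈ BRset i U a then (1 : ℝ) else 0) / (BRset i U a).card
    else 0

/-- A finite (nonempty) history of action profiles; `⟨T, α⟩` has length `T+1`. -/
abbrev Hist (n : ℕ) := Σ T : ℕ, (Fin (T + 1) → Profile n)

/-- The last action profile of a history. -/
def lastProf {n : ℕ} (h : Hist n) : Profile n := h.2 (Fin.last h.1)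

/-- `Uh` is an aligned history-dependent game with reference static game `Uhat`. -/
def Aligned {n : ℕ} (Uh : Hist n → UtilProfile n) (Uhat : UtilProfile n) : Prop :=
  ∀ (h : Hist n) (a : Profile n) (i : Fin n),
    (∀ j, j ≠ i → a j ≤ lastProf h j) →
    Uhat i (Function.update a i true) ≤ Uh h i (Function.update (lastProf h) i true) ∧
    Uh h i (Function.update (lastProf h) i false) ≤ Uhat i (Function.update a i false)

/-- The prefix `α^{≤t}` of a path `α` (a history of length `t+1`). -/
def prefixHist {n T : ℕ} (α : Fin (T + 1) → Profile n) (t : Fin T) : Hist n :=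
  ⟨t.1, fun s => α (Fin.castLE (Nat.succ_le_succ t.isLt.le) s)⟩

/-- The path measure of the history-dependent game:
`P_π(α) = π(α¹) ∏_t P^{α^{≤t}}(α^{t+1})`. -/
noncomputable def pathHist {n : ℕ} (P : Rule n) (Uh : Hist n → UtilProfile n)
    (π : Profile n → ℝ) (T : ℕ) (α : Fin (T + 1) → Profile n) : ℝ :=
  π (α 0) * ∏ t : Fin T, P (α t.castSucc) (α t.succ) (Uh (prefixHist α t))

/-- The path measure of the static game:
`P̂_π(α) = π(α¹) ∏_t P̂^{α^t}(α^{t+1})`. -/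
noncomputable def pathStatic {n : ℕ} (P : Rule n) (Uhat : UtilProfile n)
    (π : Profile n → ℝ) (T : ℕ) (α : Fin (T + 1) → Profile n) : ℝ :=
  π (α 0) * ∏ t : Fin T, P (α t.castSucc) (α t.succ) Uhat

/-- `π` is a probability distribution on the set of action profiles. -/
def IsProb {n : ℕ} (π : Profile n → ℝ) : Prop :=
  (∀ a, 0 ≤ π a) ∧ ∑ a : Profile n, π a = 1

/-- The probability that the process governed by the path measure `μ` is at profile `a`
at the final time of paths of length `T+1`. -/
noncomputable def prAt {n : ℕ} (T : ℕ) (μ : (Fin (T + 1) → Profile n) → ℝ)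
    (a : Profile n) : ℝ :=
  ∑ α ∈ Finset.univ.filter (fun α : Fin (T + 1) → Profile n => α (Fin.last T) = a), μ α

/-- `a` is a strict Nash equilibrium of the static game with utilities `U`. -/
def IsStrictNash {n : ℕ} (U : UtilProfile n) (a : Profile n) : Prop :=
  ∀ (i : Fin n) (b : Bool), b ≠ a i → U i (Function.update a i b) < U i a

/-! ### Auxiliary development: coupling of the two chains -/

section Aux

variable {n : ℕ}

lemma mem_BRset_iff {i : Fin n} {U : UtilProfile n} {a : Profile n} {b : Bool} :
    b ∈ BRset i U a ↔ ∀ b' : Bool,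
      U i (Function.update a i b') ≤ U i (Function.update a i b) := by
  simp [BRset]

lemma true_mem_BRset {i : Fin n} {U : UtilProfile n} {a : Profile n} :
    true ∈ BRset i U a ↔
      U i (Function.update a i false) ≤ U i (Function.update a i true) := by
  rw [mem_BRset_iff]
  constructor
  · intro h; exact h false
  · intro h b'; cases b' <;> simp [h]

lemma false_mem_BRset {i : Fin n} {U : UtilProfile n} {a : Profile n} :
    false ∈ BRset i U a ↔
      U i (Function.update a i true) ≤ U i (Function.update a i false) := by
  rw [mem_BRset_iff]
  constructor
  · intro h; exact h true
  · intro h b'; cases b' <;> simp [h]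

lemma BRset_nonempty (i : Fin n) (U : UtilProfile n) (a : Profile n) :
    (BRset i U a).Nonempty := by
  rcases le_total (U i (Function.update a i false)) (U i (Function.update a i true)) with h | h
  · exact ⟨true, true_mem_BRset.2 h⟩
  · exact ⟨false, false_mem_BRset.2 h⟩

lemma card_bool_finset (s : Finset Bool) :
    s.card = (if true ∈ s then 1 else 0) + (if false ∈ s then 1 else 0) := by
  by_cases ht : true ∈ s <;> by_cases hf : false ∈ s
  · have : s = {true, false} := by
      ext b; cases b <;> simp [ht, hf]
    simp [this, ht, hf]
  · have : s = {true} := by ext b; cases b <;> simp [ht, hf]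
    simp [this, ht, hf]
  · have : s = {false} := by ext b; cases b <;> simp [ht, hf]
    simp [this, ht, hf]
  · have : s = ∅ := by ext b; cases b <;> simp [ht, hf]
    simp [this, ht, hf]

lemma BRcard_pos (i : Fin n) (U : UtilProfile n) (a : Profile n) :
    0 < (BRset i U a).card :=
  Finset.card_pos.2 (BRset_nonempty i U a)

lemma BRcard_le_two (i : Fin n) (U : UtilProfile n) (a : Profile n) :
    (BRset i U a).card ≤ 2 := by
  rw [card_bool_finset]
  split <;> split <;> norm_num

/-- Probability that best-responding agent `i` plays action `b`. -/
noncomputable def pOf (i : Fin n) (U : UtilProfile n) (a : Profile n) (b : Bool) : ℝ :=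
  (if b ∈ BRset i U a then (1 : ℝ) else 0) / (BRset i U a).card

lemma bestResponse_eq (i : Fin n) (a b : Profile n) (U : UtilProfile n) :
    bestResponse i a b U
      = if ∀ j, j ≠ i → a j = b j then pOf i U a (b i) else 0 := rfl

lemma pOf_nonneg (i : Fin n) (U : UtilProfile n) (a : Profile n) (b : Bool) :
    0 ≤ pOf i U a b := by
  unfold pOf
  apply div_nonneg
  · split <;> norm_num
  · positivity

lemma pOf_le_one (i : Fin n) (U : UtilProfile n) (a : Profile n) (b : Bool) :
    pOf i U a b ≤ 1 := by
  unfold pOf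
  rw [div_le_one (by exact_mod_cast BRcard_pos i U a)]
  have := BRcard_pos i U a
  split
  · exact_mod_cast this
  · positivity

lemma pOf_sum (i : Fin n) (U : UtilProfile n) (a : Profile n) :
    pOf i U a true + pOf i U a false = 1 := by
  unfold pOf
  rw [← add_div, div_eq_one_iff_eq (by exact_mod_cast (BRcard_pos i U a).ne')]
  rw [card_bool_finset (BRset i U a)]
  push_cast
  split <;> split <;> norm_num

lemma pOf_false_eq (i : Fin n) (U : UtilProfile n) (a : Profile n) :
    pOf i U a false = 1 - pOf i U a true := by
  have := pOf_sum i U a; linarith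

/-- The monotone coupling of two Bernoulli distributions on `Bool`. -/
noncomputable def cpl (p q : ℝ) : Bool → Bool → ℝ
  | true, true => min p q
  | true, false => p - min p q
  | false, true => q - min p q
  | false, false => 1 - max p q

lemma cpl_nonneg {p q : ℝ} (hp0 : 0 ≤ p) (hp1 : p ≤ 1) (hq0 : 0 ≤ q) (hq1 : q ≤ 1)
    (d s : Bool) : 0 ≤ cpl p q d s := by
  cases d <;> cases s <;> simp [cpl, le_min_iff, max_le_iff] <;>
    first
      | exact ⟨hp0, hq0⟩
      | exact ⟨hp1, hq1⟩
      | exact min_le_left p q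
      | exact min_le_right p q

lemma cpl_sum_snd (p q : ℝ) (d : Bool) :
    cpl p q d true + cpl p q d false = if d then p else 1 - p := by
  have := min_add_max p q
  cases d <;> simp [cpl] <;> linarith

lemma cpl_sum_fst (p q : ℝ) (s : Bool) :
    cpl p q true s + cpl p q false s = if s then q else 1 - q := by
  have := min_add_max p q
  cases s <;> simp [cpl] <;> linarith

lemma cpl_false_true {p q : ℝ} (h : q ≤ p) : cpl p q false true = 0 := by
  simp [cpl, min_eq_right h]

/-- Probability that best-responding agent `i` plays `true`. -/
noncomputable def pT (i : Fin n) (U : UtilProfile n) (a : Profile n) : ℝ :=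
  pOf i U a true

lemma pT_eq_one {i : Fin n} {U : UtilProfile n} {a : Profile n}
    (h : U i (Function.update a i false) < U i (Function.update a i true)) :
    pT i U a = 1 := by
  have hbr : BRset i U a = {true} := by
    ext b; cases b
    · simp [false_mem_BRset, not_le.2 h]
    · simp [true_mem_BRset, h.le]
  unfold pT pOf
  simp [hbr]

/-- The key monotonicity: under alignment, the probability that agent `i` plays
`true` in the history-dependent game dominates the static one. -/
lemma pT_mono (Uh : Hist n → UtilProfile n) (Uhat : UtilProfile n)
    (hA : Aligned Uh Uhat) (h : Hist n) (y : Profile n)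
    (hyx : ∀ j, y j ≤ lastProf h j) (i : Fin n) :
    pT i Uhat y ≤ pT i (Uh h) (lastProf h) := by
  obtain ⟨h1, h0⟩ := hA h y i (fun j _ => hyx j)
  by_cases hw : Uhat i (Function.update y i false) ≤ Uhat i (Function.update y i true)
  · -- true is a static best response
    have hv : Uh h i (Function.update (lastProf h) i false)
        ≤ Uh h i (Function.update (lastProf h) i true) := le_trans h0 (le_trans hw h1)
    have htd : true ∈ BRset i (Uh h) (lastProf h) := true_mem_BRset.2 hv
    have hts : true ∈ BRset i Uhat y := true_mem_BRset.2 hw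
    have hcard : (BRset i (Uh h) (lastProf h)).card ≤ (BRset i Uhat y).card := by
      rw [card_bool_finset, card_bool_finset (BRset i Uhat y)]
      have : false ∈ BRset i (Uh h) (lastProf h) → false ∈ BRset i Uhat y := by
        intro hfd
        have := false_mem_BRset.1 hfd
        exact false_mem_BRset.2 (le_trans h1 (le_trans this h0))
      simp only [htd, hts, if_true]
      by_cases hfd : false ∈ BRset i (Uh h) (lastProf h)
      · simp [hfd, this hfd]
      · simp only [hfd, if_false]; split <;> norm_num
    unfold pT pOf
    simp only [htd, hts, if_true]
    apply one_div_le_one_div_of_le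
    · exact_mod_cast BRcard_pos i (Uh h) (lastProf h)
    · exact_mod_cast hcard
  · -- true is not a static best response: static probability is 0
    have : pT i Uhat y = 0 := by
      unfold pT pOf
      simp [true_mem_BRset, hw]
    rw [this]
    exact pOf_nonneg _ _ _ _

/-- The coupled one-step transition kernel. -/
noncomputable def Qstep (Ud Us : UtilProfile n) (x y x' y' : Profile n) : ℝ :=
  (1 / (n : ℝ)) * ∑ i : Fin n,
    if (∀ j, j ≠ i → x j = x' j) ∧ (∀ j, j ≠ i → y j = y' j)
    then cpl (pT i Ud x) (pT i Us y) (x' i) (y' i) else 0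

lemma Qstep_nonneg (Ud Us : UtilProfile n) (x y x' y' : Profile n) :
    0 ≤ Qstep Ud Us x y x' y' := by
  unfold Qstep
  apply mul_nonneg (by positivity)
  apply Finset.sum_nonneg
  intro i _
  split
  · exact cpl_nonneg (pOf_nonneg _ _ _ _) (pOf_le_one _ _ _ _)
      (pOf_nonneg _ _ _ _) (pOf_le_one _ _ _ _) _ _
  · exact le_refl 0

/-- Sum of an indicator over profiles matching `y` off coordinate `i`. -/
lemma sum_over_match (y : Profile n) (i : Fin n) (F : Profile n → ℝ) :
    ∑ y' : Profile n, (if ∀ j, j ≠ i → y j = y' j then F y' else 0)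
      = F (Function.update y i true) + F (Function.update y i false) := by
  rw [← Finset.sum_filter]
  have hset : Finset.univ.filter (fun y' : Profile n => ∀ j, j ≠ i → y j = y' j)
      = {Function.update y i true, Function.update y i false} := by
    ext y'
    simp only [Finset.mem_filter, Finset.mem_univ, true_and, Finset.mem_insert,
      Finset.mem_singleton]
    constructor
    · intro hm
      rcases Bool.eq_false_or_eq_true (y' i) with h | h
      · left
        funext j
        by_cases hj : j = i
        · subst hj; rw [Function.update_self]; exact h
        · rw [Function.update_of_ne hj]; exact (hm j hj).symm
      · right
        funext j
        by_cases hj : j = i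
        · subst hj; rw [Function.update_self]; exact h
        · rw [Function.update_of_ne hj]; exact (hm j hj).symm
    · rintro (rfl | rfl) j hj <;> rw [Function.update_of_ne hj]
  rw [hset, Finset.sum_pair]
  intro hc
  have := congrFun hc i
  simp at this

lemma Qstep_margin_snd (Ud Us : UtilProfile n) (x y x' : Profile n) :
    ∑ y' : Profile n, Qstep Ud Us x y x' y'
      = asyncRule (fun i => bestResponse i) x x' Ud := by
  unfold Qstep asyncRule
  rw [← Finset.mul_sum, Finset.sum_comm]
  congr 1
  apply Finset.sum_congr rfl
  intro i _
  beta_reduce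
  rw [bestResponse_eq]
  by_cases hmx : ∀ j, j ≠ i → x j = x' j
  · simp only [and_iff_right hmx, if_pos hmx]
    rw [sum_over_match y i (fun y' => cpl (pT i Ud x) (pT i Us y) (x' i) (y' i))]
    simp only [Function.update_self]
    rw [cpl_sum_snd]
    unfold pT
    cases hb : x' i
    · simp [pOf_false_eq]
    · simp
  · simp [hmx]

lemma Qstep_margin_fst (Ud Us : UtilProfile n) (x y y' : Profile n) :
    ∑ x' : Profile n, Qstep Ud Us x y x' y'
      = asyncRule (fun i => bestResponse i) y y' Us := by
  unfold Qstep asyncRule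
  rw [← Finset.mul_sum, Finset.sum_comm]
  congr 1
  apply Finset.sum_congr rfl
  intro i _
  beta_reduce
  rw [bestResponse_eq]
  by_cases hmy : ∀ j, j ≠ i → y j = y' j
  · simp only [and_iff_left hmy, if_pos hmy]
    rw [sum_over_match x i (fun x' => cpl (pT i Ud x) (pT i Us y) (x' i) (y' i))]
    simp only [Function.update_self]
    rw [cpl_sum_fst]
    unfold pT
    cases hb : y' i
    · simp [pOf_false_eq]
    · simp
  · simp [hmy]

lemma Qstep_support {Ud Us : UtilProfile n} {x y x' y' : Profile n}
    (hmono : ∀ i, pT i Us y ≤ pT i Ud x) (hyx : ∀ j, y j ≤ x j)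
    (hne : Qstep Ud Us x y x' y' ≠ 0) : ∀ j, y' j ≤ x' j := by
  have hex : ∃ i : Fin n,
      (if (∀ j, j ≠ i → x j = x' j) ∧ (∀ j, j ≠ i → y j = y' j)
        then cpl (pT i Ud x) (pT i Us y) (x' i) (y' i) else 0) ≠ 0 := by
    by_contra hc
    push_neg at hc
    apply hne
    unfold Qstep
    rw [Finset.sum_congr rfl (fun i _ => hc i), Finset.sum_const, smul_zero, mul_zero]
  obtain ⟨i, hi⟩ := hex
  have hm : (∀ j, j ≠ i → x j = x' j) ∧ (∀ j, j ≠ i → y j = y' j) := by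
    by_contra hc; rw [if_neg hc] at hi; exact hi rfl
  rw [if_pos hm] at hi
  intro j
  by_cases hj : j = i
  · subst hj
    cases hx' : x' j
    · cases hy' : y' j
      · exact le_refl _
      · exfalso
        apply hi
        rw [hx', hy']
        exact cpl_false_true (hmono j)
    · exact Bool.le_true _
  · rw [← hm.1 j hj, ← hm.2 j hj]
    exact hyx j

lemma sum_snoc {X : Type*} [Fintype X] {T : ℕ} (F : (Fin (T + 2) → X) → ℝ) :
    ∑ f : Fin (T + 2) → X, F f
      = ∑ g : Fin (T + 1) → X, ∑ x : X, F (Fin.snoc g x) := by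
  rw [← Equiv.sum_comp (Fin.snocEquiv (fun _ => X)) F, Fintype.sum_prod_type,
    Finset.sum_comm]
  rfl

lemma prefixHist_castSucc {T : ℕ} (α : Fin (T + 2) → Profile n) (t : Fin T) :
    prefixHist α t.castSucc = prefixHist (Fin.init α) t := by
  unfold prefixHist Fin.init
  apply Sigma.ext
  · rfl
  · apply heq_of_eq
    funext s
    congr 1

lemma lastProf_prefixHist {T : ℕ} (α : Fin (T + 1) → Profile n) (t : Fin T) :
    lastProf (prefixHist α t) = α t.castSucc := by
  unfold lastProf prefixHist
  congr 1

lemma prefixHist_snoc_last {T : ℕ} (g : Fin (T + 1) → Profile n) (x : Profile n) :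
    prefixHist (Fin.snoc g x) (Fin.last T) = ⟨T, g⟩ := by
  have hfun : (fun s : Fin (T + 1) =>
      (Fin.snoc g x : Fin (T + 2) → Profile n)
        (Fin.castLE (Nat.succ_le_succ (Fin.last T).isLt.le) s)) = g := by
    funext s
    have hc : (Fin.castLE (Nat.succ_le_succ (Fin.last T).isLt.le) s : Fin (T + 2))
        = Fin.castSucc s := Fin.ext (by simp)
    rw [hc, Fin.snoc_castSucc]
  exact congrArg (fun f : Fin (T + 1) → Profile n => (⟨T, f⟩ : Hist n)) hfun

/-- The coupled path measure. -/
noncomputable def CP (Uh : Hist n → UtilProfile n) (Uhat : UtilProfile n)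
    (π : Profile n → ℝ) (T : ℕ) (α β : Fin (T + 1) → Profile n) : ℝ :=
  (if β 0 = α 0 then π (α 0) else 0) *
    ∏ t : Fin T, Qstep (Uh (prefixHist α t)) Uhat
      (α t.castSucc) (β t.castSucc) (α t.succ) (β t.succ)

lemma CP_nonneg (Uh : Hist n → UtilProfile n) (Uhat : UtilProfile n)
    {π : Profile n → ℝ} (hπ0 : ∀ a, 0 ≤ π a) (T : ℕ)
    (α β : Fin (T + 1) → Profile n) : 0 ≤ CP Uh Uhat π T α β := by
  unfold CP
  apply mul_nonneg
  · split
    · exact hπ0 _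
    · exact le_refl 0
  · exact Finset.prod_nonneg fun t _ => Qstep_nonneg _ _ _ _ _ _

lemma asyncBR_nonneg (a b : Profile n) (U : UtilProfile n) :
    0 ≤ asyncRule (fun i => bestResponse i) a b U := by
  unfold asyncRule
  apply mul_nonneg (by positivity)
  apply Finset.sum_nonneg
  intro i _
  beta_reduce
  rw [bestResponse_eq]
  split
  · exact pOf_nonneg _ _ _ _
  · exact le_refl 0

lemma pathHist_nonneg (Uh : Hist n → UtilProfile n)
    {π : Profile n → ℝ} (hπ0 : ∀ a, 0 ≤ π a) (T : ℕ)
    (α : Fin (T + 1) → Profile n) :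
    0 ≤ pathHist (asyncRule fun i => bestResponse i) Uh π T α :=
  mul_nonneg (hπ0 _) (Finset.prod_nonneg fun t _ => asyncBR_nonneg _ _ _)

lemma CP_snoc (Uh : Hist n → UtilProfile n) (Uhat : UtilProfile n)
    (π : Profile n → ℝ) (T : ℕ) (α β : Fin (T + 2) → Profile n) :
    CP Uh Uhat π (T + 1) α β
      = CP Uh Uhat π T (Fin.init α) (Fin.init β) *
        Qstep (Uh (prefixHist α (Fin.last T))) Uhat
          (α (Fin.last T).castSucc) (β (Fin.last T).castSucc)
          (α (Fin.last (T + 1))) (β (Fin.last (T + 1))) := by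
  unfold CP
  rw [Fin.prod_univ_castSucc]
  have h0a : Fin.init α 0 = α 0 := by simp [Fin.init]
  have h0b : Fin.init β 0 = β 0 := by simp [Fin.init]
  rw [h0a, h0b]
  have hfac : ∀ t : Fin T,
      Qstep (Uh (prefixHist α t.castSucc)) Uhat
        (α t.castSucc.castSucc) (β t.castSucc.castSucc)
        (α t.castSucc.succ) (β t.castSucc.succ)
      = Qstep (Uh (prefixHist (Fin.init α) t)) Uhat
        (Fin.init α t.castSucc) (Fin.init β t.castSucc)
        (Fin.init α t.succ) (Fin.init β t.succ) := by
    intro t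
    rw [prefixHist_castSucc]
    simp [Fin.init, Fin.succ_castSucc, -Fin.castSucc_succ]
  rw [Finset.prod_congr rfl (fun t _ => hfac t), Fin.succ_last]
  ring

lemma pathHist_snoc (P : Rule n) (Uh : Hist n → UtilProfile n)
    (π : Profile n → ℝ) (T : ℕ) (α : Fin (T + 2) → Profile n) :
    pathHist P Uh π (T + 1) α
      = pathHist P Uh π T (Fin.init α) *
        P (α (Fin.last T).castSucc) (α (Fin.last (T + 1)))
          (Uh (prefixHist α (Fin.last T))) := by
  unfold pathHist
  rw [Fin.prod_univ_castSucc]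
  have h0a : Fin.init α 0 = α 0 := by simp [Fin.init]
  rw [h0a]
  have hfac : ∀ t : Fin T,
      P (α t.castSucc.castSucc) (α t.castSucc.succ) (Uh (prefixHist α t.castSucc))
      = P (Fin.init α t.castSucc) (Fin.init α t.succ)
          (Uh (prefixHist (Fin.init α) t)) := by
    intro t
    rw [prefixHist_castSucc]
    simp [Fin.init, Fin.succ_castSucc, -Fin.castSucc_succ]
  rw [Finset.prod_congr rfl (fun t _ => hfac t), Fin.succ_last]
  ring

lemma pathStatic_snoc (P : Rule n) (Uhat : UtilProfile n)
    (π : Profile n → ℝ) (T : ℕ) (α : Fin (T + 2) → Profile n) :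
    pathStatic P Uhat π (T + 1) α
      = pathStatic P Uhat π T (Fin.init α) *
        P (α (Fin.last T).castSucc) (α (Fin.last (T + 1))) Uhat := by
  unfold pathStatic
  rw [Fin.prod_univ_castSucc]
  have h0a : Fin.init α 0 = α 0 := by simp [Fin.init]
  rw [h0a]
  have hfac : ∀ t : Fin T,
      P (α t.castSucc.castSucc) (α t.castSucc.succ) Uhat
      = P (Fin.init α t.castSucc) (Fin.init α t.succ) Uhat := by
    intro t
    simp [Fin.init, Fin.succ_castSucc, -Fin.castSucc_succ]
  rw [Finset.prod_congr rfl (fun t _ => hfac t), Fin.succ_last]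
  ring

lemma CP_margin_snd (Uh : Hist n → UtilProfile n) (Uhat : UtilProfile n)
    (π : Profile n → ℝ) :
    ∀ (T : ℕ) (α : Fin (T + 1) → Profile n),
      ∑ β : Fin (T + 1) → Profile n, CP Uh Uhat π T α β
        = pathHist (asyncRule fun i => bestResponse i) Uh π T α := by
  intro T
  induction T with
  | zero =>
    intro α
    unfold CP pathHist
    simp only [Finset.univ_eq_empty, Finset.prod_empty, mul_one]
    rw [← Equiv.sum_comp (Equiv.funUnique (Fin 1) (Profile n)).symm
      (fun β => if β 0 = α 0 then π (α 0) else 0)]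
    simp [Finset.sum_ite_eq']
  | succ T ih =>
    intro α
    rw [sum_snoc (fun β => CP Uh Uhat π (T + 1) α β)]
    have hstep : ∀ g : Fin (T + 1) → Profile n,
        ∑ x : Profile n, CP Uh Uhat π (T + 1) α (Fin.snoc g x)
          = CP Uh Uhat π T (Fin.init α) g *
            asyncRule (fun i => bestResponse i) (α (Fin.last T).castSucc)
              (α (Fin.last (T + 1))) (Uh (prefixHist α (Fin.last T))) := by
      intro g
      have : ∀ x : Profile n,
          CP Uh Uhat π (T + 1) α (Fin.snoc g x)
            = CP Uh Uhat π T (Fin.init α) g *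
              Qstep (Uh (prefixHist α (Fin.last T))) Uhat
                (α (Fin.last T).castSucc) (g (Fin.last T))
                (α (Fin.last (T + 1))) x := by
        intro x
        rw [CP_snoc]
        simp [Fin.init_snoc, Fin.snoc_castSucc, Fin.snoc_last]
      rw [Finset.sum_congr rfl (fun x _ => this x), ← Finset.mul_sum,
        Qstep_margin_snd]
    rw [Finset.sum_congr rfl (fun g _ => hstep g), ← Finset.sum_mul, ih,
      ← pathHist_snoc]

lemma CP_margin_fst (Uh : Hist n → UtilProfile n) (Uhat : UtilProfile n)
    (π : Profile n → ℝ) :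
    ∀ (T : ℕ) (β : Fin (T + 1) → Profile n),
      ∑ α : Fin (T + 1) → Profile n, CP Uh Uhat π T α β
        = pathStatic (asyncRule fun i => bestResponse i) Uhat π T β := by
  intro T
  induction T with
  | zero =>
    intro β
    unfold CP pathStatic
    simp only [Finset.univ_eq_empty, Finset.prod_empty, mul_one]
    rw [← Equiv.sum_comp (Equiv.funUnique (Fin 1) (Profile n)).symm
      (fun α => if β 0 = α 0 then π (α 0) else 0)]
    simp [Finset.sum_ite_eq]
  | succ T ih =>
    intro β
    rw [sum_snoc (fun α => CP Uh Uhat π (T + 1) α β)]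
    have hstep : ∀ g : Fin (T + 1) → Profile n,
        ∑ x : Profile n, CP Uh Uhat π (T + 1) (Fin.snoc g x) β
          = CP Uh Uhat π T g (Fin.init β) *
            asyncRule (fun i => bestResponse i) (β (Fin.last T).castSucc)
              (β (Fin.last (T + 1))) Uhat := by
      intro g
      have : ∀ x : Profile n,
          CP Uh Uhat π (T + 1) (Fin.snoc g x) β
            = CP Uh Uhat π T g (Fin.init β) *
              Qstep (Uh ⟨T, g⟩) Uhat
                (g (Fin.last T)) (β (Fin.last T).castSucc)
                x (β (Fin.last (T + 1))) := by
        intro x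
        rw [CP_snoc, prefixHist_snoc_last]
        simp [Fin.init_snoc, Fin.snoc_castSucc, Fin.snoc_last]
      rw [Finset.sum_congr rfl (fun x _ => this x), ← Finset.mul_sum,
        Qstep_margin_fst]
    rw [Finset.sum_congr rfl (fun g _ => hstep g), ← Finset.sum_mul, ih,
      ← pathStatic_snoc]

lemma CP_support (Uh : Hist n → UtilProfile n) (Uhat : UtilProfile n)
    (hA : Aligned Uh Uhat) (π : Profile n → ℝ) :
    ∀ (T : ℕ) (α β : Fin (T + 1) → Profile n),
      CP Uh Uhat π T α β ≠ 0 → ∀ j, β (Fin.last T) j ≤ α (Fin.last T) j := by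
  intro T
  induction T with
  | zero =>
    intro α β hne j
    have h0 : β 0 = α 0 := by
      by_contra hc
      apply hne
      unfold CP
      rw [if_neg hc, zero_mul]
    have hl : (Fin.last 0) = (0 : Fin 1) := rfl
    rw [hl, h0]
  | succ T ih =>
    intro α β hne
    rw [CP_snoc] at hne
    have h1 : CP Uh Uhat π T (Fin.init α) (Fin.init β) ≠ 0 :=
      fun hc => hne (by rw [hc, zero_mul])
    have h2 : Qstep (Uh (prefixHist α (Fin.last T))) Uhat
        (α (Fin.last T).castSucc) (β (Fin.last T).castSucc)
        (α (Fin.last (T + 1))) (β (Fin.last (T + 1))) ≠ 0 :=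
      fun hc => hne (by rw [hc, mul_zero])
    have hyx : ∀ j, β (Fin.last T).castSucc j ≤ α (Fin.last T).castSucc j := by
      have := ih (Fin.init α) (Fin.init β) h1
      simpa [Fin.init] using this
    have hlp : lastProf (prefixHist α (Fin.last T)) = α (Fin.last T).castSucc :=
      lastProf_prefixHist α (Fin.last T)
    have hmono : ∀ i, pT i Uhat (β (Fin.last T).castSucc)
        ≤ pT i (Uh (prefixHist α (Fin.last T))) (α (Fin.last T).castSucc) := by
      intro i
      have := pT_mono Uh Uhat hA (prefixHist α (Fin.last T))
        (β (Fin.last T).castSucc) (by rw [hlp]; exact hyx) i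
      rwa [hlp] at this
    exact Qstep_support hmono hyx h2

lemma br_stay_one (Uh : Hist n → UtilProfile n) (Uhat : UtilProfile n)
    (hA : Aligned Uh Uhat) (hNE : IsStrictNash Uhat (fun _ => true))
    (hn : 1 ≤ n) (h : Hist n) (hl : lastProf h = fun _ => true) :
    asyncRule (fun i => bestResponse i) (fun _ => true) (fun _ => true) (Uh h)
      = 1 := by
  unfold asyncRule
  have hone : ∀ i : Fin n,
      bestResponse i (fun _ => true) (fun _ => true) (Uh h) = 1 := by
    intro i
    rw [bestResponse_eq, if_pos (fun j _ => rfl)]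
    have e1 : Function.update (fun _ : Fin n => true) i true = (fun _ => true) := by
      funext j
      by_cases hj : j = i
      · subst hj; simp
      · simp [Function.update_of_ne hj]
    have hlt : Uh h i (Function.update (fun _ => true) i false)
        < Uh h i (Function.update (fun _ => true) i true) := by
      obtain ⟨h1, h0⟩ := hA h (fun _ => true) i (fun j _ => by simp [hl])
      rw [hl] at h1 h0
      have hne := hNE i false (by simp)
      calc Uh h i (Function.update (fun _ => true) i false)
          ≤ Uhat i (Function.update (fun _ => true) i false) := h0
        _ < Uhat i (fun _ => true) := hne
        _ = Uhat i (Function.update (fun _ => true) i true) := by rw [e1]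
        _ ≤ Uh h i (Function.update (fun _ => true) i true) := h1
    exact pT_eq_one hlt
  rw [Finset.sum_congr rfl (fun i _ => hone i), Finset.sum_const,
    Finset.card_univ, Fintype.card_fin, nsmul_eq_mul, mul_one]
  have hn0 : (n : ℝ) ≠ 0 := by positivity
  field_simp

end Aux

/-- For an aligned history-dependent game under asynchronous best response dynamics:
if the all-ones profile is a strict Nash equilibrium of the reference static game,
then the history-dependent probability of the all-ones profile dominates the static one
at every time; if moreover `π` has full support, it is positive at every time. -/
theorem br_dominance_and_positivity (n : ℕ) (hn : 1 ≤ n)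
    (Uh : Hist n → UtilProfile n) (Uhat : UtilProfile n) (hA : Aligned Uh Uhat)
    (hNE : IsStrictNash Uhat (fun _ => true))
    (π : Profile n → ℝ) (hπ : IsProb π) :
    (∀ T : ℕ,
      prAt T (pathStatic (asyncRule fun i => bestResponse i) Uhat π T) (fun _ => true)
        ≤ prAt T (pathHist (asyncRule fun i => bestResponse i) Uh π T) (fun _ => true)) ∧
    ((∀ a, 0 < π a) → ∀ T : ℕ,
      0 < prAt T (pathHist (asyncRule fun i => bestResponse i) Uh π T) (fun _ => true)) := by
  have htrue : ∀ b : Bool, true ≤ b → b = true := by decide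
  constructor
  · -- dominance
    intro T
    unfold prAt
    rw [Finset.sum_congr rfl (fun β _ => (CP_margin_fst Uh Uhat π T β).symm)]
    rw [Finset.sum_comm]
    have key : ∀ α : Fin (T + 1) → Profile n,
        (∑ β ∈ Finset.univ.filter
            (fun β : Fin (T + 1) → Profile n => β (Fin.last T) = fun _ => true),
          CP Uh Uhat π T α β)
        ≤ (if α (Fin.last T) = (fun _ => true) then
            ∑ β : Fin (T + 1) → Profile n, CP Uh Uhat π T α β else 0) := by
      intro α
      by_cases hα : α (Fin.last T) = fun _ => true
      · rw [if_pos hα]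
        exact Finset.sum_le_sum_of_subset_of_nonneg (Finset.filter_subset _ _)
          (fun β _ _ => CP_nonneg Uh Uhat hπ.1 T α β)
      · rw [if_neg hα]
        apply le_of_eq
        apply Finset.sum_eq_zero
        intro β hβ
        rw [Finset.mem_filter] at hβ
        by_contra hne0
        apply hα
        funext j
        apply htrue
        have := CP_support Uh Uhat hA π T α β hne0 j
        rw [hβ.2] at this
        exact this
    calc ∑ α : Fin (T + 1) → Profile n,
          ∑ β ∈ Finset.univ.filter
            (fun β : Fin (T + 1) → Profile n => β (Fin.last T) = fun _ => true),
            CP Uh Uhat π T α β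
        ≤ ∑ α : Fin (T + 1) → Profile n,
            (if α (Fin.last T) = (fun _ => true) then
              ∑ β : Fin (T + 1) → Profile n, CP Uh Uhat π T α β else 0) :=
          Finset.sum_le_sum (fun α _ => key α)
      _ = ∑ α ∈ Finset.univ.filter
            (fun α : Fin (T + 1) → Profile n => α (Fin.last T) = fun _ => true),
            ∑ β : Fin (T + 1) → Profile n, CP Uh Uhat π T α β :=
          (Finset.sum_filter _ _).symm
      _ = ∑ α ∈ Finset.univ.filter
            (fun α : Fin (T + 1) → Profile n => α (Fin.last T) = fun _ => true),
            pathHist (asyncRule fun i => bestResponse i) Uh π T α :=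
          Finset.sum_congr rfl (fun α _ => CP_margin_snd Uh Uhat π T α)
  · -- positivity
    intro hpos T
    unfold prAt
    have hmem : (fun _ : Fin (T + 1) => (fun _ : Fin n => true))
        ∈ Finset.univ.filter
          (fun α : Fin (T + 1) → Profile n => α (Fin.last T) = fun _ => true) := by
      simp
    have hconst : 0 < pathHist (asyncRule fun i => bestResponse i) Uh π T
        (fun _ => fun _ => true) := by
      unfold pathHist
      have hfac : ∀ t : Fin T,
          asyncRule (fun i => bestResponse i) (fun _ : Fin n => true)
            (fun _ : Fin n => true)
            (Uh (prefixHist (fun _ : Fin (T + 1) => (fun _ : Fin n => true)) t))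
          = 1 := by
        intro t
        apply br_stay_one Uh Uhat hA hNE hn
        rw [lastProf_prefixHist]
      rw [Finset.prod_congr rfl (fun t _ => hfac t), Finset.prod_const_one,
        mul_one]
      exact hpos _
    exact lt_of_lt_of_le hconst
      (Finset.single_le_sum
        (fun α _ => pathHist_nonneg Uh hπ.1 T α) hmem)
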